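/- Let n be an odd positive integer, let d be a positive integer with gcd(d, n) = 1, and let q = 2^n. Let ∘ denote the symplectic Knuth presemifield multiplication on F_q. Then: (i) for every m ∈ F_q with m ∉ {0,1}, the set {y ∈ F_q : (y^{2^d} + y) ∘ m + y = 0} has exactly 2 elements; (ii) the set {y ∈ F_q : (y^{2^d} + y) ∘ 1 + y = 0} equals {0}. (These facts express that O_d := {(y^{2^d}+y, y) : y ∈ F_q} ∪ {(0),(1)} is a translation hyperoval in the symplectic presemifield plane Π(K_n^{td}).) -/

import Mathlib

/-- Theorem 4.1: for `gcd(d,n) = 1`, the set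
`O_d = {(y^{2^d}+y, y) : y ∈ F_q} ∪ {(0),(1)}` is a translation hyperoval in the
symplectic Knuth presemifield plane `Π(K_n^{td})`.  Analytically: (i) for every
`m ∉ {0,1}` the equation `(y^{2^d}+y) ∘ m + y = 0` has exactly `2` solutions, and
(ii) `(y^{2^d}+y) ∘ 1 + y = 0` only for `y = 0`. -/
theorem symplectic_hyperoval_Od
    (n : ℕ) (hn : Odd n) (hn0 : 0 < n)
    (d : ℕ) (hd : 0 < d) (hdn : Nat.gcd d n = 1)
    {F : Type*} [Field F] [Fintype F] (hF : Fintype.card F = 2 ^ n)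
    (Tr : F → F) (hTr : ∀ x : F, Tr x = ∑ i ∈ Finset.range n, x ^ 2 ^ i)
    (smul : F → F → F)
    (hsmul : ∀ x y : F, smul x y = x * y + Tr x * y ^ 2 ^ (n - 1) + Tr (x ^ 2 * y)) :
    (∀ m : F, m ≠ 0 → m ≠ 1 →
      ({y : F | smul (y ^ 2 ^ d + y) m + y = 0}).ncard = 2) ∧
    {y : F | smul (y ^ 2 ^ d + y) 1 + y = 0} = {0} := by
  classical
  -- characteristic 2
  haveI hp2 : CharP F 2 := by
    have hp : CharP F (ringChar F) := ringChar.charP F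
    obtain ⟨k, hkp, hcard⟩ := FiniteField.card F (ringChar F)
    have hdvd : ringChar F ∣ 2 ^ n := by
      rw [← hF, hcard]
      exact dvd_pow_self _ k.ne_zero
    have h2 : ringChar F = 2 :=
      (Nat.prime_dvd_prime_iff_eq hkp Nat.prime_two).mp (hkp.dvd_of_dvd_pow hdvd)
    exact h2 ▸ hp
  have two0 : (2 : F) = 0 := CharTwo.two_eq_zero
  -- Frobenius-power additivity
  have frob_add : ∀ (x y : F) (k : ℕ), (x + y) ^ 2 ^ k = x ^ 2 ^ k + y ^ 2 ^ k := by
    intro x y k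
    exact add_pow_char_pow ..
  have hq : ∀ x : F, x ^ 2 ^ n = x := by
    intro x; rw [← hF]; exact FiniteField.pow_card x
  have powinj : ∀ (k : ℕ) (x y : F), x ^ 2 ^ k = y ^ 2 ^ k → x = y := by
    intro k x y h
    have h2 : (x + y) ^ 2 ^ k = 0 := by
      rw [frob_add, h, CharTwo.add_self_eq_zero]
    have h3 : x + y = 0 := pow_eq_zero_iff (by positivity) |>.mp h2
    have := CharTwo.add_self_eq_zero (R := F) y
    linear_combination h3 - this
  -- fixed points of the d-th Frobenius power are 0 and 1
  have iter : ∀ (e : ℕ) (x : F), x ^ 2 ^ e = x → ∀ k : ℕ, x ^ 2 ^ (e * k) = x := by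
    intro e x hx k
    induction k with
    | zero => simp
    | succ k ih =>
        have : (2 : ℕ) ^ (e * (k + 1)) = 2 ^ (e * k) * 2 ^ e := by
          rw [← pow_add]; ring_nf
        rw [this, pow_mul, ih, hx]
  have fixF2 : ∀ x : F, x ^ 2 ^ d = x → x = 0 ∨ x = 1 := by
    intro x hx
    have hsq : x ^ 2 = x := by
      rcases eq_or_lt_of_le (Nat.one_le_iff_ne_zero.mpr hn0.ne') with h1 | h1
      · -- n = 1 : x^2 = x for all x since x^{2^1} = x
        have := hq x
        rw [← h1] at this
        simpa using this
      · obtain ⟨a, -, ha⟩ := Nat.exists_mul_mod_eq_one_of_coprime hdn h1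
        have hda : x ^ 2 ^ (d * a) = x := iter d x hx a
        have hsplit : d * a = n * (d * a / n) + 1 := by
          conv_lhs => rw [← Nat.div_add_mod (d * a) n]
          rw [ha]
        have hn' : x ^ 2 ^ (n * (d * a / n)) = x := iter n x (hq x) _
        rw [hsplit, pow_succ, pow_mul, hn'] at hda
        exact hda
    have : x * (x - 1) = 0 := by ring_nf; linear_combination hsq
    rcases mul_eq_zero.mp this with h | h
    · exact Or.inl h
    · exact Or.inr (by linear_combination h)
  have hPQ : ∀ P Q : F, P ≠ 0 → Q ≠ 0 → P * Q ^ 2 ^ d = P ^ 2 ^ d * Q → P = Q := by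
    intro P Q hP hQ h
    have hz : (Q * P⁻¹) ^ 2 ^ d = Q * P⁻¹ := by
      have hPe : P ^ 2 ^ d ≠ 0 := pow_ne_zero _ hP
      rw [mul_pow, inv_pow]
      field_simp
      linear_combination h
    rcases fixF2 _ hz with h0 | h1
    · exact absurd h0 (mul_ne_zero hQ (inv_ne_zero hP))
    · field_simp at h1
      exact h1.symm
  -- trace lemmas
  have Tr0 : Tr 0 = 0 := by
    rw [hTr]
    exact Finset.sum_eq_zero fun i _ => zero_pow (by positivity)
  have Tradd : ∀ x y : F, Tr (x + y) = Tr x + Tr y := by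
    intro x y
    rw [hTr, hTr, hTr, ← Finset.sum_add_distrib]
    exact Finset.sum_congr rfl fun i _ => frob_add x y i
  have Trsq : ∀ x : F, Tr (x ^ 2) = Tr x := by
    intro x
    rw [hTr, hTr]
    have key : ∀ i : ℕ, (x ^ 2) ^ 2 ^ i = x ^ 2 ^ (i + 1) := by
      intro i
      rw [← pow_mul, pow_succ']
    have h1 : (∑ i ∈ Finset.range n, x ^ 2 ^ (i + 1)) + x ^ 2 ^ 0
        = (∑ i ∈ Finset.range n, x ^ 2 ^ i) + x ^ 2 ^ n := by
      rw [← Finset.sum_range_succ' (fun i => x ^ 2 ^ i) n, Finset.sum_range_succ]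
    have h2 : x ^ 2 ^ n = x ^ 2 ^ 0 := by rw [hq x, pow_zero, pow_one]
    rw [h2] at h1
    have h3 : (∑ i ∈ Finset.range n, x ^ 2 ^ (i + 1))
        = ∑ i ∈ Finset.range n, x ^ 2 ^ i := add_right_cancel h1
    rw [Finset.sum_congr rfl fun i _ => key i, h3]
  have Trpow : ∀ (k : ℕ) (x : F), Tr (x ^ 2 ^ k) = Tr x := by
    intro k
    induction k with
    | zero => intro x; simp
    | succ k ih =>
        intro x
        have : x ^ 2 ^ (k + 1) = (x ^ 2 ^ k) ^ 2 := by
          rw [← pow_mul, pow_succ]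
        rw [this, Trsq, ih]
  have Tr01 : ∀ x : F, Tr x = 0 ∨ Tr x = 1 := by
    intro x
    have hsq : Tr x ^ 2 = Tr x := by
      rw [hTr, CharTwo.sum_sq]
      have : ∀ i ∈ Finset.range n, (x ^ 2 ^ i) ^ 2 = (x ^ 2) ^ 2 ^ i := by
        intro i _
        rw [← pow_mul, ← pow_mul, mul_comm]
      rw [Finset.sum_congr rfl this, ← hTr, Trsq, hTr]
    have : Tr x * (Tr x - 1) = 0 := by ring_nf; linear_combination hsq
    rcases mul_eq_zero.mp this with h | h
    · exact Or.inl h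
    · exact Or.inr (by linear_combination h)
  have Tru : ∀ y : F, Tr (y ^ 2 ^ d + y) = 0 := by
    intro y
    rw [Tradd, Trpow d y, CharTwo.add_self_eq_zero]
  -- characterization of solutions
  have charac : ∀ m y : F,
      smul (y ^ 2 ^ d + y) m + y = 0 ↔
      y + Tr ((y ^ 2 ^ d + y) * y) = m * (y ^ 2 ^ d + y) := by
    intro m y
    rw [hsmul, Tru, zero_mul, add_zero]
    constructor
    · intro h
      have hum : (y ^ 2 ^ d + y) * m = y + Tr ((y ^ 2 ^ d + y) ^ 2 * m) := by
        linear_combination h - (Tr ((y ^ 2 ^ d + y) ^ 2 * m) + y) * two0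
      have ht : Tr ((y ^ 2 ^ d + y) ^ 2 * m) = Tr ((y ^ 2 ^ d + y) * y) := by
        have h1 : (y ^ 2 ^ d + y) ^ 2 * m
            = (y ^ 2 ^ d + y) * y + (y ^ 2 ^ d + y) * Tr ((y ^ 2 ^ d + y) ^ 2 * m) := by
          linear_combination (y ^ 2 ^ d + y) * hum
        rw [h1, Tradd]
        rcases Tr01 ((y ^ 2 ^ d + y) ^ 2 * m) with h0 | h0 <;> rw [h0]
        · rw [mul_zero, Tr0, add_zero]
        · rw [mul_one, Tru, add_zero]
      rw [ht] at hum
      linear_combination -hum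
    · intro h
      have ht : Tr ((y ^ 2 ^ d + y) ^ 2 * m) = Tr ((y ^ 2 ^ d + y) * y) := by
        have h1 : (y ^ 2 ^ d + y) ^ 2 * m
            = (y ^ 2 ^ d + y) * y + (y ^ 2 ^ d + y) * Tr ((y ^ 2 ^ d + y) * y) := by
          linear_combination -(y ^ 2 ^ d + y) * h
        rw [h1, Tradd]
        rcases Tr01 ((y ^ 2 ^ d + y) * y) with h0 | h0 <;> rw [h0]
        · rw [mul_zero, Tr0, add_zero]
        · rw [mul_one, Tru, add_zero]
      rw [ht]
      linear_combination h + (y ^ 2 ^ d + y) * m * two0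
  -- y = 0 is always a solution ; y = 1 never is (for the equation form)
  have sol0 : ∀ m : F, (0 : F) + Tr (((0:F) ^ 2 ^ d + 0) * 0) = m * ((0:F) ^ 2 ^ d + 0) := by
    intro m
    rw [zero_pow (by positivity : (2:ℕ) ^ d ≠ 0)]
    simp [Tr0]
  have u1 : (1 : F) ^ 2 ^ d + 1 = 0 := by
    rw [one_pow, CharTwo.add_self_eq_zero]
  constructor
  · -- part (i)
    intro m hm0 hm1
    -- `e(y+1) = e(y)`
    have eadd1 : ∀ y : F,
        Tr (((y + 1) ^ 2 ^ d + (y + 1)) * (y + 1)) = Tr ((y ^ 2 ^ d + y) * y) := by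
      intro y
      have h1 : (y + 1) ^ 2 ^ d = y ^ 2 ^ d + 1 := by rw [frob_add, one_pow]
      rw [h1]
      have h2 : (y ^ 2 ^ d + 1 + (y + 1)) * (y + 1)
          = (y ^ 2 ^ d + y) * y + (y ^ 2 ^ d + y) := by
        linear_combination (y + 1) * two0
      rw [h2, Tradd, Tru, add_zero]
    -- nonzero elements with u = 0 must be 1
    have hune : ∀ y : F, y ≠ 0 → y ≠ 1 → y ^ 2 ^ d + y ≠ 0 := by
      intro y hy0 hy1 h
      have : y ^ 2 ^ d = y := by linear_combination h - y * two0
      rcases fixF2 y this with h0 | h0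
      · exact hy0 h0
      · exact hy1 h0
    -- uniqueness of nonzero solutions
    have uniq : ∀ a b : F, a ≠ 0 → a ≠ 1 → b ≠ 0 → b ≠ 1 →
        (a + Tr ((a ^ 2 ^ d + a) * a)) * (b ^ 2 ^ d + b)
          = (b + Tr ((b ^ 2 ^ d + b) * b)) * (a ^ 2 ^ d + a) → a = b := by
      intro a b ha0 ha1 hb0 hb1 cross
      rcases Tr01 ((a ^ 2 ^ d + a) * a) with hea | hea <;>
        rcases Tr01 ((b ^ 2 ^ d + b) * b) with heb | heb <;>
          rw [hea, heb] at cross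
      · -- e a = 0, e b = 0
        have key : a * b ^ 2 ^ d = a ^ 2 ^ d * b := by linear_combination cross
        exact hPQ a b ha0 hb0 key
      · -- e a = 0, e b = 1
        exfalso
        have key : a * (b + 1) ^ 2 ^ d = a ^ 2 ^ d * (b + 1) := by
          rw [frob_add b 1 d, one_pow]
          linear_combination cross + a * two0
        have hb1' : b + 1 ≠ 0 := by
          intro h; exact hb1 (by linear_combination h - two0)
        have hab : a = b + 1 := hPQ a (b + 1) ha0 hb1' key
        have hba : b = a + 1 := by linear_combination -hab - two0
        rw [hba, eadd1 a, hea] at heb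
        exact one_ne_zero heb.symm
      · -- e a = 1, e b = 0
        exfalso
        have key : b * (a + 1) ^ 2 ^ d = b ^ 2 ^ d * (a + 1) := by
          rw [frob_add a 1 d, one_pow]
          linear_combination -cross + b * two0
        have ha1' : a + 1 ≠ 0 := by
          intro h; exact ha1 (by linear_combination h - two0)
        have hab : b = a + 1 := hPQ b (a + 1) hb0 ha1' key
        rw [hab, eadd1 a, hea] at heb
        exact one_ne_zero heb
      · -- e a = 1, e b = 1
        by_cases hab : a = b
        · exact hab
        exfalso
        have key : (a + 1) * (a + b) ^ 2 ^ d = (a + 1) ^ 2 ^ d * (a + b) := by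
          rw [frob_add a b d, frob_add a 1 d, one_pow]
          linear_combination cross + (a ^ 2 ^ d - b) * two0
        have ha1' : a + 1 ≠ 0 := by
          intro h; exact ha1 (by linear_combination h - two0)
        have hab' : a + b ≠ 0 := by
          intro h; exact hab (powinj 0 a b (by simpa using (by linear_combination h - b * two0 : a = b)))
        have h1 : a + 1 = a + b := hPQ (a + 1) (a + b) ha1' hab' key
        exact hb1 (add_left_cancel h1).symm
    -- existence of a nonzero solution, via a counting argument
    set A : Set F := {y : F | y ≠ 0 ∧ y ≠ 1} with hA
    set g : F → F := fun y => (y + Tr ((y ^ 2 ^ d + y) * y)) / (y ^ 2 ^ d + y) with hg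
    have hmaps : Set.MapsTo g A A := by
      rintro y ⟨hy0, hy1⟩
      have hu : y ^ 2 ^ d + y ≠ 0 := hune y hy0 hy1
      have hnum : y + Tr ((y ^ 2 ^ d + y) * y) ≠ 0 := by
        rcases Tr01 ((y ^ 2 ^ d + y) * y) with h0 | h0 <;> rw [h0]
        · simpa using hy0
        · intro h; exact hy1 (by linear_combination h - two0)
      constructor
      · exact div_ne_zero hnum hu
      · intro h
        have heq : y + Tr ((y ^ 2 ^ d + y) * y) = y ^ 2 ^ d + y := by
          have h2 : (y + Tr ((y ^ 2 ^ d + y) * y)) / (y ^ 2 ^ d + y) = 1 := h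
          exact (div_eq_one_iff_eq hu).mp h2
        rcases Tr01 ((y ^ 2 ^ d + y) * y) with h0 | h0 <;> rw [h0] at heq
        · exact hy0 (powinj d y 0 (by rw [zero_pow (by positivity : (2:ℕ) ^ d ≠ 0)]; linear_combination -heq))
        · exact hy1 (powinj d y 1 (by rw [one_pow]; linear_combination -heq))
    have hinj : Set.InjOn g A := by
      rintro a ⟨ha0, ha1⟩ b ⟨hb0, hb1⟩ hgab
      have hua : a ^ 2 ^ d + a ≠ 0 := hune a ha0 ha1
      have hub : b ^ 2 ^ d + b ≠ 0 := hune b hb0 hb1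
      have cross : (a + Tr ((a ^ 2 ^ d + a) * a)) * (b ^ 2 ^ d + b)
          = (b + Tr ((b ^ 2 ^ d + b) * b)) * (a ^ 2 ^ d + a) := by
        rw [hg] at hgab
        field_simp at hgab
        rw [mul_comm a (a ^ 2 ^ d + a), mul_comm b (b ^ 2 ^ d + b)] at hgab
        linear_combination hgab
      exact uniq a b ha0 ha1 hb0 hb1 cross
    have hfin : A.Finite := Set.toFinite A
    have hbij : Set.BijOn g A A :=
      (Set.Finite.injOn_iff_bijOn_of_mapsTo hfin hmaps).mp hinj
    obtain ⟨y₁, hy₁A, hgy₁⟩ := hbij.surjOn (⟨hm0, hm1⟩ : m ∈ A)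
    obtain ⟨hy₁0, hy₁1⟩ := hy₁A
    have hu₁ : y₁ ^ 2 ^ d + y₁ ≠ 0 := hune y₁ hy₁0 hy₁1
    have hEq₁ : y₁ + Tr ((y₁ ^ 2 ^ d + y₁) * y₁) = m * (y₁ ^ 2 ^ d + y₁) := by
      rw [hg] at hgy₁
      field_simp at hgy₁
      rw [mul_comm y₁ (y₁ ^ 2 ^ d + y₁)] at hgy₁
      linear_combination hgy₁
    have hS : {y : F | smul (y ^ 2 ^ d + y) m + y = 0} = {0, y₁} := by
      ext z
      rw [Set.mem_setOf_eq, charac m z, Set.mem_insert_iff, Set.mem_singleton_iff]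
      constructor
      · intro hz
        by_cases hz0 : z = 0
        · exact Or.inl hz0
        right
        have hz1 : z ≠ 1 := by
          rintro rfl
          rw [u1, mul_zero, zero_mul, Tr0, add_zero] at hz
          exact one_ne_zero hz
        have cross : (z + Tr ((z ^ 2 ^ d + z) * z)) * (y₁ ^ 2 ^ d + y₁)
            = (y₁ + Tr ((y₁ ^ 2 ^ d + y₁) * y₁)) * (z ^ 2 ^ d + z) := by
          rw [hz, hEq₁]; ring
        exact uniq z y₁ hz0 hz1 hy₁0 hy₁1 cross
      · rintro (rfl | rfl)
        · exact sol0 m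
        · exact hEq₁
    rw [hS]
    exact Set.ncard_pair (Ne.symm hy₁0)
  · -- part (ii)
    ext y
    rw [Set.mem_setOf_eq, charac 1 y, Set.mem_singleton_iff]
    constructor
    · intro h
      rw [one_mul] at h
      have hyd : y ^ 2 ^ d = Tr ((y ^ 2 ^ d + y) * y) := by
        linear_combination -h
      rcases Tr01 ((y ^ 2 ^ d + y) * y) with h0 | h0 <;> rw [h0] at hyd
      · exact pow_eq_zero_iff (by positivity : (2:ℕ) ^ d ≠ 0) |>.mp hyd
      · exfalso
        have hy1 : y = 1 := powinj d y 1 (by rw [one_pow]; exact hyd)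
        rw [hy1, u1, zero_mul, Tr0] at h0
        exact one_ne_zero h0.symm
    · rintro rfl
      exact sol0 1
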